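/- Under the quasi-particle propagator setup with |z|, |α| ≤ 1/4, there are constants c, C > 0 depending only on a₀ and γ such that for every integer h with a₀γ^{h+1} ≤ c·r̄, the set T_h = {(k₀, k) ∈ ℝ × [−π, π] : k ≥ −p_F/2 and (1+z)² k₀² + (1+α)² (cos k − cos p_F)² ≤ a₀² γ^{2(h+1)}} has two-dimensional Lebesgue measure at most C γ^{2h} / √r̄. -/

import Mathlib

open MeasureTheory

set_option maxHeartbeats 1000000 in
/-- Measure of the second-regime quasi-particle support: there are
`c, C > 0` depending only on `a₀, γ` such that for `p_F ∈ (0, π/3]`,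
`|z|, |α| ≤ 1/4` and scales `h` with `a₀γ^{h+1} ≤ c·r̄`, `r̄ = 1 - cos p_F`, the set
`T_h = {(k₀,k) ∈ ℝ×[-π,π] : k ≥ -p_F/2, (1+z)²k₀² + (1+α)²(cos k - cos p_F)² ≤ a₀²γ^{2(h+1)}}`
has Lebesgue measure at most `C γ^{2h}/√r̄`. -/
theorem stmt_13 (a₀ γ : ℝ) (ha₀ : 0 < a₀) (hγ1 : 1 < γ) (hγ2 : γ ≤ 2) :
    ∃ c > 0, ∃ C > 0, ∀ pF z α : ℝ, pF ∈ Set.Ioc (0 : ℝ) (Real.pi / 3) →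
      |z| ≤ 1 / 4 → |α| ≤ 1 / 4 →
      ∀ h : ℤ, a₀ * γ ^ (h + 1) ≤ c * (1 - Real.cos pF) →
      volume {p : ℝ × ℝ | p.2 ∈ Set.Icc (-Real.pi) Real.pi ∧ -pF / 2 ≤ p.2 ∧
          (1 + z) ^ 2 * p.1 ^ 2 +
              (1 + α) ^ 2 * (Real.cos p.2 - Real.cos pF) ^ 2
            ≤ a₀ ^ 2 * γ ^ (2 * (h + 1))}
        ≤ ENNReal.ofReal (C * γ ^ (2 * (h : ℝ)) / Real.sqrt (1 - Real.cos pF)) := by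
  refine ⟨1/4, by norm_num, 9 * a₀^2 * γ^2, by positivity, ?_⟩
  intro pF z α hpF hz hα h hscale
  obtain ⟨hpF0, hpF3⟩ := hpF
  have hπ := Real.pi_pos
  have hpFπ : pF ≤ Real.pi := hpF3.trans (by linarith)
  have hcos12 : (1:ℝ)/2 ≤ Real.cos pF := by
    have := Real.cos_le_cos_of_nonneg_of_le_pi hpF0.le (by linarith : Real.pi/3 ≤ Real.pi) hpF3
    rwa [Real.cos_pi_div_three] at this
  set r : ℝ := 1 - Real.cos pF with hr_def
  have hr0 : 0 < r := by
    have h1 : Real.cos pF < Real.cos 0 :=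
      Real.strictAntiOn_cos ⟨le_rfl, hπ.le⟩ ⟨hpF0.le, hpFπ⟩ hpF0
    rw [Real.cos_zero] at h1
    simp only [hr_def]; linarith
  have hr12 : r ≤ 1/2 := by simp only [hr_def]; linarith
  have hγ0 : (0:ℝ) < γ := by linarith
  obtain ⟨ε, hε_def⟩ : ∃ ε : ℝ, ε = a₀ * γ ^ (h+1) := ⟨_, rfl⟩
  have hε0 : 0 < ε := by rw [hε_def]; positivity
  have hεr : ε ≤ r / 4 := by rw [hε_def]; linarith [hscale]
  obtain ⟨δ, hδ_def⟩ : ∃ δ : ℝ, δ = (4/3) * ε := ⟨_, rfl⟩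
  have hδ0 : 0 < δ := by rw [hδ_def]; positivity
  have hδr : δ ≤ r / 3 := by rw [hδ_def]; linarith
  -- half-angle fact : cos (pF/2) - cos pF ≥ r/2
  have hhalf : r / 2 ≤ Real.cos (pF/2) - Real.cos pF := by
    have hc2 : Real.cos pF = 2 * Real.cos (pF/2)^2 - 1 := by
      have := Real.cos_sq (pF/2)
      rw [show 2 * (pF/2) = pF by ring] at this
      linarith
    have hc2pos : 0 ≤ Real.cos (pF/2) := by
      apply Real.cos_nonneg_of_mem_Icc
      exact ⟨by linarith, by linarith⟩
    have hc1 : Real.cos (pF/2) ≤ 1 := Real.cos_le_one _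
    have hprod0 : 0 ≤ Real.cos (pF/2) * (1 - Real.cos (pF/2)) :=
      mul_nonneg hc2pos (by linarith)
    simp only [hr_def]
    linarith [hprod0, hc2]
  have hu1 : Real.cos pF + δ ≤ 1 - 2/3 * r := by simp only [hr_def]; linarith
  have hu2 : (1:ℝ)/3 ≤ Real.cos pF - δ := by linarith
  set a : ℝ := Real.arccos (Real.cos pF + δ) with ha_def
  set b : ℝ := Real.arccos (Real.cos pF - δ) with hb_def
  have hmem1 : (-1:ℝ) ≤ Real.cos pF + δ := by linarith
  have hmem2 : Real.cos pF + δ ≤ 1 := by linarith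
  have hmem3 : (-1:ℝ) ≤ Real.cos pF - δ := by linarith
  have hmem4 : Real.cos pF - δ ≤ 1 := by linarith
  have hab : a ≤ b := by
    rw [ha_def, hb_def, Real.arccos, Real.arccos]
    have := Real.monotone_arcsin (by linarith : Real.cos pF - δ ≤ Real.cos pF + δ)
    linarith
  have ha0 : 0 ≤ a := Real.arccos_nonneg _
  have hbπ2 : b ≤ Real.pi / 2 := Real.arccos_le_pi_div_two.mpr (by linarith)
  have hcosa : Real.cos a = Real.cos pF + δ := Real.cos_arccos hmem1 hmem2
  have hcosb : Real.cos b = Real.cos pF - δ := Real.cos_arccos hmem3 hmem4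
  -- sin a lower bound
  have hsina : (4/5) * Real.sqrt r ≤ Real.sin a := by
    rw [ha_def, Real.sin_arccos]
    have hprod : (2/3*r) * (3/2) ≤ (1 - (Real.cos pF + δ)) * (1 + (Real.cos pF + δ)) := by
      apply mul_le_mul (by linarith) (by linarith) (by norm_num) (by linarith)
    have hexp : (1 - (Real.cos pF + δ)) * (1 + (Real.cos pF + δ)) = 1 - (Real.cos pF + δ)^2 := by
      ring
    have h1 : 16/25 * r ≤ 1 - (Real.cos pF + δ)^2 := by
      rw [← hexp]; linarith [hprod, hr0]
    calc (4/5) * Real.sqrt r = Real.sqrt (16/25 * r) := by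
          rw [Real.sqrt_mul (by norm_num : (0:ℝ) ≤ 16/25),
            show (16:ℝ)/25 = (4/5)^2 by norm_num, Real.sqrt_sq (by norm_num : (0:ℝ) ≤ 4/5)]
      _ ≤ _ := Real.sqrt_le_sqrt h1
  have hsina0 : 0 < Real.sin a := by
    have : (0:ℝ) < (4/5) * Real.sqrt r := by positivity
    linarith
  -- integral bound: sin a * (b - a) ≤ 2δ
  have hint : Real.sin a * (b - a) ≤ 2 * δ := by
    have h1 : ∫ x in a..b, Real.sin x = Real.cos a - Real.cos b := integral_sin
    have h2 : ∫ x in a..b, Real.sin a ≤ ∫ x in a..b, Real.sin x := by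
      apply intervalIntegral.integral_mono_on hab intervalIntegrable_const
        (Real.continuous_sin.intervalIntegrable a b)
      intro x hx
      exact Real.strictMonoOn_sin.monotoneOn ⟨by linarith, by linarith [hx.2]⟩
        ⟨by linarith [hx.1], by linarith [hx.2]⟩ hx.1
    rw [intervalIntegral.integral_const, smul_eq_mul, h1, hcosa, hcosb] at h2
    linarith [h2]
  have hsr0 : 0 < Real.sqrt r := Real.sqrt_pos.mpr hr0
  have hba' : b - a ≤ (5/2) * δ / Real.sqrt r := by
    rw [le_div_iff₀ hsr0]
    have h1 : (4/5 * Real.sqrt r) * (b - a) ≤ Real.sin a * (b - a) := by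
      apply mul_le_mul_of_nonneg_right hsina (by linarith)
    have h2 : (4/5 * Real.sqrt r) * (b - a) ≤ 2 * δ := h1.trans hint
    linarith [h2]
  -- subset
  have hsub : {p : ℝ × ℝ | p.2 ∈ Set.Icc (-Real.pi) Real.pi ∧ -pF / 2 ≤ p.2 ∧
          (1 + z) ^ 2 * p.1 ^ 2 +
              (1 + α) ^ 2 * (Real.cos p.2 - Real.cos pF) ^ 2
            ≤ a₀ ^ 2 * γ ^ (2 * (h + 1))}
      ⊆ Set.Icc (-δ) δ ×ˢ Set.Icc a b := by
    rintro ⟨k₀, k⟩ ⟨hk1, hk2, hk3⟩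
    have hz1 : (3:ℝ)/4 ≤ 1 + z := by have := abs_le.mp hz; linarith [this.1]
    have hα1 : (3:ℝ)/4 ≤ 1 + α := by have := abs_le.mp hα; linarith [this.1]
    have hε2 : a₀ ^ 2 * γ ^ (2 * (h + 1)) = ε^2 := by
      rw [hε_def, mul_pow]
      congr 1
      rw [← zpow_natCast (γ ^ (h+1)) 2, ← zpow_mul]
      congr 1
      push_cast
      ring
    rw [hε2] at hk3
    have hk3' : (1 + z) ^ 2 * k₀ ^ 2 +
        (1 + α) ^ 2 * (Real.cos k - Real.cos pF) ^ 2 ≤ ε^2 := hk3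
    have hnn1 : 0 ≤ (1 + z) ^ 2 * k₀ ^ 2 := by positivity
    have hnn2 : 0 ≤ (1 + α) ^ 2 * (Real.cos k - Real.cos pF) ^ 2 := by positivity
    have hT1 : (1 + z) ^ 2 * k₀ ^ 2 ≤ ε^2 := by linarith
    have hT2 : (1 + α) ^ 2 * (Real.cos k - Real.cos pF) ^ 2 ≤ ε^2 := by linarith
    have hk₀sq : k₀^2 ≤ δ^2 := by
      have h34 : (3/4:ℝ)^2 ≤ (1+z)^2 := by
        rw [pow_two, pow_two]; exact mul_le_mul hz1 hz1 (by norm_num) (by linarith)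
      have hh : (3/4:ℝ)^2 * k₀^2 ≤ (1+z)^2 * k₀^2 :=
        mul_le_mul_of_nonneg_right h34 (sq_nonneg k₀)
      rw [hδ_def]; linarith [hh, hT1]
    have hk₀ : |k₀| ≤ δ := by
      have := Real.sqrt_le_sqrt hk₀sq
      rwa [Real.sqrt_sq_eq_abs, Real.sqrt_sq hδ0.le] at this
    have hcksq : (Real.cos k - Real.cos pF)^2 ≤ δ^2 := by
      have h34' : (3/4:ℝ)^2 ≤ (1+α)^2 := by
        rw [pow_two, pow_two]; exact mul_le_mul hα1 hα1 (by norm_num) (by linarith)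
      have hh : (3/4:ℝ)^2 * (Real.cos k - Real.cos pF)^2 ≤ (1+α)^2 * (Real.cos k - Real.cos pF)^2 :=
        mul_le_mul_of_nonneg_right h34' (sq_nonneg _)
      rw [hδ_def]; linarith [hh, hT2]
    have hck : |Real.cos k - Real.cos pF| ≤ δ := by
      have := Real.sqrt_le_sqrt hcksq
      rwa [Real.sqrt_sq_eq_abs, Real.sqrt_sq hδ0.le] at this
    have habs := abs_le.mp hck
    -- k ≥ 0
    have hk0 : 0 ≤ k := by
      by_contra hneg
      push_neg at hneg
      have hkk : -k ≤ pF/2 := by linarith [hk2]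
      have hcc : Real.cos (pF/2) ≤ Real.cos k := by
        have hckk : Real.cos (-k) = Real.cos k := Real.cos_neg k
        rw [← hckk]
        exact Real.cos_le_cos_of_nonneg_of_le_pi (by linarith) (by linarith) hkk
      linarith [hhalf, habs.2, hcc, hδr]
    have hkab : a ≤ k ∧ k ≤ b := by
      have hk' : k = Real.arccos (Real.cos k) := (Real.arccos_cos hk0 hk1.2).symm
      constructor
      · rw [hk', ha_def, Real.arccos, Real.arccos]
        have := Real.monotone_arcsin (by linarith [habs.2] : Real.cos k ≤ Real.cos pF + δ)
        linarith
      · rw [hk', hb_def, Real.arccos, Real.arccos]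
        have := Real.monotone_arcsin (by linarith [habs.1] : Real.cos pF - δ ≤ Real.cos k)
        linarith
    exact ⟨abs_le.mp hk₀, hkab⟩
  have hrpow : γ ^ (2 * (h:ℝ)) = (γ ^ (h+1) : ℝ)^2 / γ^2 := by
    have h1 : γ ^ (2 * (h:ℝ)) = γ ^ ((2*h : ℤ) : ℝ) := by push_cast; ring_nf
    rw [h1, Real.rpow_intCast, ← zpow_natCast (γ ^ (h+1)) 2, ← zpow_mul,
      eq_div_iff (by positivity : (γ:ℝ)^2 ≠ 0), ← zpow_natCast γ 2,
      ← zpow_add₀ (ne_of_gt hγ0)]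
    norm_num; ring_nf
  have hRHS : 9 * a₀^2 * γ^2 * γ ^ (2 * (h:ℝ)) = 9 * ε^2 := by
    rw [hrpow, hε_def, mul_pow]
    field_simp
  calc volume _ ≤ volume (Set.Icc (-δ) δ ×ˢ Set.Icc a b) := measure_mono hsub
    _ = ENNReal.ofReal (δ - -δ) * ENNReal.ofReal (b - a) := by
        rw [Measure.volume_eq_prod, Measure.prod_prod, Real.volume_Icc, Real.volume_Icc]
    _ ≤ ENNReal.ofReal (9 * a₀^2 * γ^2 * γ ^ (2 * (h:ℝ)) / Real.sqrt r) := by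
        rw [← ENNReal.ofReal_mul (by linarith)]
        apply ENNReal.ofReal_le_ofReal
        rw [hRHS]
        have key : (δ - -δ) * (b - a) ≤ 2*δ * ((5/2) * δ / Real.sqrt r) :=
          mul_le_mul (by linarith) hba' (by linarith [hab]) (by linarith)
        have h2 : 2*δ * ((5/2) * δ / Real.sqrt r) = 5 * δ^2 / Real.sqrt r := by
          field_simp
        rw [h2] at key
        apply key.trans
        have h5 : 5 * δ^2 ≤ 9 * ε^2 := by rw [hδ_def]; linarith [sq_nonneg ε]
        exact div_le_div_of_nonneg_right h5 hsr0.le
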